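/- For every n ≥ 4, the distance between ρ_n = 1^n and η_n = 1^{n-1}0 in the Schreier graph Γ_n satisfies d_{Γ_n}(ρ_n, η_n) ≥ 2^{n-3}. -/

import Mathlib

noncomputable section

/-! ### The Grigorchuk generators -/

namespace Grig

def aFun : List Bool → List Bool
  | [] => []
  | x :: w => (!x) :: w

mutual
  def bFun : List Bool → List Bool
    | [] => []
    | false :: w => false :: aFun w
    | true :: w => true :: cFun w
  def cFun : List Bool → List Bool
    | [] => []
    | false :: w => false :: aFun w
    | true :: w => true :: dFun w
  def dFun : List Bool → List Bool
    | [] => []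
    | false :: w => false :: w
    | true :: w => true :: bFun w
end

theorem aFun_involutive : Function.Involutive aFun := by
  intro w
  match w with
  | [] => rfl
  | x :: w => simp [aFun]

theorem bcd_involutive :
    ∀ w : List Bool, bFun (bFun w) = w ∧ cFun (cFun w) = w ∧ dFun (dFun w) = w := by
  intro w
  induction w with
  | nil => exact ⟨rfl, rfl, rfl⟩
  | cons x w ih =>
    rcases x with _ | _
    · simp [bFun, cFun, dFun, aFun_involutive w]
    · simp [bFun, cFun, dFun, ih.1, ih.2.1, ih.2.2]

theorem bFun_involutive : Function.Involutive bFun := fun w => (bcd_involutive w).1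
theorem cFun_involutive : Function.Involutive cFun := fun w => (bcd_involutive w).2.1
theorem dFun_involutive : Function.Involutive dFun := fun w => (bcd_involutive w).2.2

theorem aFun_length : ∀ w : List Bool, (aFun w).length = w.length := by
  intro w
  match w with
  | [] => rfl
  | x :: w => simp [aFun]

theorem bcd_length : ∀ w : List Bool,
    (bFun w).length = w.length ∧ (cFun w).length = w.length ∧ (dFun w).length = w.length := by
  intro w
  induction w with
  | nil => exact ⟨rfl, rfl, rfl⟩
  | cons x w ih =>
    rcases x with _ | _
    · simp [bFun, cFun, dFun, aFun_length w]
    · simp [bFun, cFun, dFun, ih.1, ih.2.1, ih.2.2]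

theorem bFun_length : ∀ w, (bFun w).length = w.length := fun w => (bcd_length w).1
theorem cFun_length : ∀ w, (cFun w).length = w.length := fun w => (bcd_length w).2.1
theorem dFun_length : ∀ w, (dFun w).length = w.length := fun w => (bcd_length w).2.2

/-- The generators of the first Grigorchuk group as permutations of the vertex set
`{0,1}*` of the rooted binary tree. -/
def aPerm : Equiv.Perm (List Bool) := aFun_involutive.toPerm
def bPerm : Equiv.Perm (List Bool) := bFun_involutive.toPerm
def cPerm : Equiv.Perm (List Bool) := cFun_involutive.toPerm
def dPerm : Equiv.Perm (List Bool) := dFun_involutive.toPerm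

/-- The generating set `S = {a, b, c, d}` (a set of involutions). -/
def Sset : Set (Equiv.Perm (List Bool)) := {aPerm, bPerm, cPerm, dPerm}

/-- The first Grigorchuk group. -/
def Grigorchuk : Subgroup (Equiv.Perm (List Bool)) := Subgroup.closure Sset

/-- Word length with respect to `S = {a, b, c, d}`. -/
def wordLength (g : Equiv.Perm (List Bool)) : ℕ :=
  sInf {k | ∃ l : List (Equiv.Perm (List Bool)),
    (∀ x ∈ l, x ∈ Sset) ∧ l.length = k ∧ l.prod = g}

/-- The growth function of the first Grigorchuk group with respect to `S`. -/
def growthGrig (m : ℕ) : ℕ :=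
  Nat.card {g : Equiv.Perm (List Bool) |
    ∃ l : List (Equiv.Perm (List Bool)), (∀ x ∈ l, x ∈ Sset) ∧ l.length ≤ m ∧ l.prod = g}

/-! ### Level transfer -/

def levelFun (n : ℕ) (f : List Bool → List Bool) (v : Fin n → Bool) : Fin n → Bool :=
  fun i => (f (List.ofFn v)).getD i false

theorem levelFun_involutive (n : ℕ) (f : List Bool → List Bool)
    (hlen : ∀ l, (f l).length = l.length) (hinv : Function.Involutive f) :
    Function.Involutive (levelFun n f) := by
  intro v
  have key : ∀ u : Fin n → Bool, List.ofFn (levelFun n f u) = f (List.ofFn u) := by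
    intro u
    apply List.ext_getElem
    · simp [hlen]
    · intro i h1 h2
      simp only [List.getElem_ofFn]
      simp [levelFun, List.getD_eq_getElem, h2]
  funext i
  simp only [levelFun, key v, hinv (List.ofFn v)]
  simp [List.getD_eq_getElem]

/-- The images `a_n, b_n, c_n, d_n` of the Grigorchuk generators in `Sym(X_n)`,
where the `n`-th level `X_n = {0,1}^n` is identified with `Fin n → Bool`. -/
def aLev (n : ℕ) : Equiv.Perm (Fin n → Bool) :=
  (levelFun_involutive n aFun aFun_length aFun_involutive).toPerm
def bLev (n : ℕ) : Equiv.Perm (Fin n → Bool) :=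
  (levelFun_involutive n bFun bFun_length bFun_involutive).toPerm
def cLev (n : ℕ) : Equiv.Perm (Fin n → Bool) :=
  (levelFun_involutive n cFun cFun_length cFun_involutive).toPerm
def dLev (n : ℕ) : Equiv.Perm (Fin n → Bool) :=
  (levelFun_involutive n dFun dFun_length dFun_involutive).toPerm

end Grig

/-! ### The boundary action and actions of words -/

/-- The (continuous extension to the boundary `∂T = {0,1}^ℕ` of the) action of a tree
automorphism on the boundary of the rooted binary tree. -/
def boundaryAct (g : Equiv.Perm (List Bool)) (ξ : ℕ → Bool) : ℕ → Bool :=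
  fun n => (g (List.ofFn fun i : Fin (n + 1) => ξ i)).getD n false

/-- Applying a word of generators to a vertex, letter by letter: the right action of the
word `l` (the generators in `S` are involutions). -/
def wordApply (l : List (Equiv.Perm (List Bool))) (v : List Bool) : List Bool :=
  l.foldl (fun v s => s v) v

/-- The right action of a word on a boundary point. -/
def wordApplyB (l : List (Equiv.Perm (List Bool))) (ξ : ℕ → Bool) : ℕ → Bool :=
  l.foldl (fun ξ s => boundaryAct s ξ) ξ

/-- The boundary point `ρ = 1^∞`. -/
def rhoInf : ℕ → Bool := fun _ => true

/-- The vertex `ρ_n = 1^n` of the `n`-th level. -/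
def rhoVertex (n : ℕ) : List Bool := List.replicate n true

/-- The vertex `η_n = 1^{n-1}0` of the `n`-th level. -/
def etaVertex (n : ℕ) : List Bool := List.replicate (n - 1) true ++ [false]
/-- The distance from `ρ_n` to `η_n` in the Schreier graph `Γ_n` of the action of the
Grigorchuk group on the `n`-th level `X_n` with respect to `S = {a,b,c,d}`: the least
length of a word over `S` carrying `ρ_n` to `η_n`. -/
noncomputable def schreierDist (n : ℕ) : ℕ :=
  sInf {k | ∃ l : List (Equiv.Perm (List Bool)),
    (∀ x ∈ l, x ∈ Grig.Sset) ∧ l.length = k ∧ wordApply l (rhoVertex n) = etaVertex n}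

/-! ### Auxiliary development for the separation theorem -/

namespace GrigProofAux
open Grig

/-- xor of complements of entries (suffix parity used in Gray decoding). -/
def nx : List Bool → Bool
  | [] => false
  | x :: w => Bool.xor (!x) (nx w)

/-- Gray-code position of a vertex in the Schreier graph. -/
def phi : List Bool → ℕ
  | [] => 0
  | x :: w => (Bool.xor (!x) (nx w)).toNat + 2 * phi w

@[simp] lemma nx_nil : nx [] = false := rfl
@[simp] lemma nx_cons (x : Bool) (w : List Bool) :
    nx (x :: w) = Bool.xor (!x) (nx w) := rfl
@[simp] lemma phi_nil : phi [] = 0 := rfl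
@[simp] lemma phi_cons (x : Bool) (w : List Bool) :
    phi (x :: w) = (Bool.xor (!x) (nx w)).toNat + 2 * phi w := rfl

/-- `a` changes `phi` by exactly 1 (or fixes, on the empty word). -/
lemma aFun_phi (w : List Bool) :
    aFun w = w ∨ phi (aFun w) = phi w + 1 ∨ phi w = phi (aFun w) + 1 := by
  match w with
  | [] => exact Or.inl rfl
  | x :: u =>
    right
    cases x <;> cases hs : nx u <;> simp [aFun, hs] <;> omega

/-- The key property: `b`, `c`, `d` either fix a word or change `phi` by exactly 1,
with the sign determined by `nx`, and flip `nx` when they move. -/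
def Pg (g : List Bool → List Bool) (w : List Bool) : Prop :=
  g w = w ∨ (nx (g w) = !(nx w) ∧
    ((nx w = true ∧ phi (g w) = phi w + 1) ∨ (nx w = false ∧ phi w = phi (g w) + 1)))

lemma bcd_phi : ∀ w : List Bool, Pg bFun w ∧ Pg cFun w ∧ Pg dFun w := by
  intro w
  induction w with
  | nil => exact ⟨Or.inl rfl, Or.inl rfl, Or.inl rfl⟩
  | cons x v ih =>
    rcases x with _ | _
    · -- head is `false`
      refine ⟨?_, ?_, Or.inl rfl⟩ <;>
      · match v with
        | [] => exact Or.inl rfl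
        | y :: u =>
          right
          cases y <;> cases hs : nx u <;>
            simp [bFun, cFun, aFun, hs] <;> omega
    · -- head is `true`
      obtain ⟨hb, hc, hd⟩ := ih
      refine ⟨?_, ?_, ?_⟩
      · -- bFun (true :: v) = true :: cFun v
        rcases hc with h | ⟨hn, hcase⟩
        · exact Or.inl (by simp [bFun, h])
        · right
          rcases hcase with ⟨h1, h2⟩ | ⟨h1, h2⟩ <;>
            simp [bFun, hn, h1, h2] <;> omega
      · -- cFun (true :: v) = true :: dFun v
        rcases hd with h | ⟨hn, hcase⟩
        · exact Or.inl (by simp [cFun, h])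
        · right
          rcases hcase with ⟨h1, h2⟩ | ⟨h1, h2⟩ <;>
            simp [cFun, hn, h1, h2] <;> omega
      · -- dFun (true :: v) = true :: bFun v
        rcases hb with h | ⟨hn, hcase⟩
        · exact Or.inl (by simp [dFun, h])
        · right
          rcases hcase with ⟨h1, h2⟩ | ⟨h1, h2⟩ <;>
            simp [dFun, hn, h1, h2] <;> omega

lemma gen_phi {s : Equiv.Perm (List Bool)} (hs : s ∈ Sset) (w : List Bool) :
    phi (s w) ≤ phi w + 1 ∧ phi w ≤ phi (s w) + 1 := by
  have key : ∀ g : List Bool → List Bool,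
      (g w = w ∨ phi (g w) = phi w + 1 ∨ phi w = phi (g w) + 1) →
      phi (g w) ≤ phi w + 1 ∧ phi w ≤ phi (g w) + 1 := by
    rintro g (h | h | h) <;> simp [h] <;> omega
  have ofPg : ∀ g, Pg g w →
      (g w = w ∨ phi (g w) = phi w + 1 ∨ phi w = phi (g w) + 1) := by
    rintro g (h | ⟨-, ⟨-, h⟩ | ⟨-, h⟩⟩)
    · exact Or.inl h
    · exact Or.inr (Or.inl h)
    · exact Or.inr (Or.inr h)
  rcases hs with h | h | h | h <;> subst h
  · exact key aFun (aFun_phi w)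
  · exact key bFun (ofPg _ (bcd_phi w).1)
  · exact key cFun (ofPg _ (bcd_phi w).2.1)
  · exact key dFun (ofPg _ (bcd_phi w).2.2)

lemma word_phi : ∀ (l : List (Equiv.Perm (List Bool))), (∀ x ∈ l, x ∈ Sset) →
    ∀ v : List Bool, phi (wordApply l v) ≤ phi v + l.length := by
  intro l
  induction l with
  | nil => intro _ v; simp [wordApply]
  | cons s t ih =>
    intro hmem v
    have h1 : phi (wordApply t (s v)) ≤ phi (s v) + t.length :=
      ih (fun x hx => hmem x (List.mem_cons_of_mem s hx)) (s v)
    have h2 := (gen_phi (hmem s (List.mem_cons_self (a := s) (l := t))) v).1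
    have : wordApply (s :: t) v = wordApply t (s v) := rfl
    rw [this]
    simp only [List.length_cons]
    omega

@[simp] lemma nx_replicate_true : ∀ n, nx (List.replicate n true) = false := by
  intro n
  induction n with
  | zero => rfl
  | succ n ih => simp [List.replicate_succ, ih]

lemma phi_rho (n : ℕ) : phi (rhoVertex n) = 0 := by
  unfold rhoVertex
  induction n with
  | zero => rfl
  | succ n ih => simp [List.replicate_succ, ih]

lemma nx_phi_eta : ∀ m : ℕ, nx (List.replicate m true ++ [false]) = true ∧
    phi (List.replicate m true ++ [false]) = 2 ^ (m + 1) - 1 := by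
  intro m
  induction m with
  | zero => simp [nx, phi]
  | succ m ih =>
    obtain ⟨h1, h2⟩ := ih
    constructor
    · simp [List.replicate_succ, h1]
    · simp only [List.replicate_succ, List.cons_append, phi_cons, h1, h2]
      have h3 : 1 ≤ 2 ^ (m + 1) := Nat.one_le_two_pow
      have h4 : (Bool.xor (!true) true).toNat = 1 := rfl
      rw [h4]
      ring_nf
      omega

/-! #### Construction of a word carrying `ρ_n` to `η_n` -/

inductive GTag | A | B | C | D

def tagPerm : GTag → Equiv.Perm (List Bool)
  | .A => aPerm
  | .B => bPerm
  | .C => cPerm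
  | .D => dPerm

lemma tagPerm_mem (g : GTag) : tagPerm g ∈ Sset := by
  cases g <;> simp [tagPerm, Sset]

/-- Substitution simulating the action on the subtree below `1`. -/
def tagSub : GTag → List GTag
  | .A => [.A, .B, .A]
  | .B => [.D]
  | .C => [.B]
  | .D => [.C]

@[simp] lemma aPerm_apply (v : List Bool) : aPerm v = aFun v := rfl
@[simp] lemma bPerm_apply (v : List Bool) : bPerm v = bFun v := rfl
@[simp] lemma cPerm_apply (v : List Bool) : cPerm v = cFun v := rfl
@[simp] lemma dPerm_apply (v : List Bool) : dPerm v = dFun v := rfl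

lemma wordApply_append (l1 l2 : List (Equiv.Perm (List Bool))) (v : List Bool) :
    wordApply (l1 ++ l2) v = wordApply l2 (wordApply l1 v) :=
  List.foldl_append

lemma tagSub_step (g : GTag) (w : List Bool) :
    wordApply ((tagSub g).map tagPerm) (true :: w) = true :: (tagPerm g) w := by
  cases g <;> simp [tagSub, tagPerm, wordApply, aFun, bFun, cFun, dFun]

lemma tagSub_lift : ∀ (l : List GTag) (w : List Bool),
    wordApply ((l.flatMap tagSub).map tagPerm) (true :: w) =
      true :: wordApply (l.map tagPerm) w := by
  intro l
  induction l with
  | nil => intro w; rfl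
  | cons g t ih =>
    intro w
    simp only [List.flatMap_cons, List.map_append, List.map_cons]
    rw [wordApply_append, tagSub_step]
    exact ih ((tagPerm g) w)

def uWord : ℕ → List GTag
  | 0 => [.A]
  | m + 1 => (uWord m).flatMap tagSub

lemma uWord_apply : ∀ m : ℕ,
    wordApply ((uWord m).map tagPerm) (List.replicate (m + 1) true) =
      List.replicate m true ++ [false] := by
  intro m
  induction m with
  | zero => simp [uWord, tagPerm, wordApply, aFun]
  | succ m ih =>
    have h : List.replicate (m + 2) true = true :: List.replicate (m + 1) true := rfl
    rw [uWord, h, tagSub_lift, ih, List.replicate_succ, List.cons_append]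

lemma exists_word (n : ℕ) (hn : 1 ≤ n) :
    ∃ l : List (Equiv.Perm (List Bool)),
      (∀ x ∈ l, x ∈ Sset) ∧ wordApply l (rhoVertex n) = etaVertex n := by
  obtain ⟨m, rfl⟩ : ∃ m, n = m + 1 := ⟨n - 1, (Nat.succ_pred_eq_of_pos hn).symm⟩
  refine ⟨(uWord m).map tagPerm, ?_, ?_⟩
  · intro x hx
    obtain ⟨g, -, rfl⟩ := List.mem_map.mp hx
    exact tagPerm_mem g
  · have := uWord_apply m
    simpa [rhoVertex, etaVertex] using this

end GrigProofAux

/-- For every `n ≥ 4` the distance between `ρ_n = 1^n` and `η_n = 1^{n-1}0` in `Γ_n`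
is at least `2^{n-3}`. -/
theorem separation (n : ℕ) (hn : 4 ≤ n) : 2 ^ (n - 3) ≤ schreierDist n := by
  classical
  set S : Set ℕ := {k | ∃ l : List (Equiv.Perm (List Bool)),
    (∀ x ∈ l, x ∈ Grig.Sset) ∧ l.length = k ∧ wordApply l (rhoVertex n) = etaVertex n} with hS
  have hbound : ∀ k ∈ S, 2 ^ n - 1 ≤ k := by
    rintro k ⟨l, hmem, hlen, happ⟩
    have h1 := GrigProofAux.word_phi l hmem (rhoVertex n)
    rw [happ, GrigProofAux.phi_rho, hlen] at h1
    have h2 : GrigProofAux.phi (etaVertex n) = 2 ^ n - 1 := by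
      have := (GrigProofAux.nx_phi_eta (n - 1)).2
      have hn1 : n - 1 + 1 = n := by omega
      rw [hn1] at this
      simpa [etaVertex] using this
    omega
  have hne : S.Nonempty := by
    obtain ⟨l, hmem, happ⟩ := GrigProofAux.exists_word n (by omega)
    exact ⟨l.length, l, hmem, rfl, happ⟩
  have hsinf : 2 ^ n - 1 ≤ schreierDist n := hbound _ (Nat.sInf_mem hne)
  have hp : 2 ^ (n - 3) * 8 = 2 ^ n := by
    rw [show (8 : ℕ) = 2 ^ 3 from rfl, ← pow_add]
    congr 1
    omega
  have hp1 : 1 ≤ 2 ^ (n - 3) := Nat.one_le_two_pow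
  omega

end
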